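/- For all natural numbers h, k ≥ 0 one has S^{(k)}_{k+h+1} = Σ_{i=0}^{k} α^{2(k−i)} · ( −b_i · S^{(i)}_{i+h} + S^{(i+1)}_{i+h} ). -/
import Mathlib


/-- `S^{(k)}_{k+h+1} = ∑_{i=0}^{k} α^{2(k-i)} (−b_i S^{(i)}_{i+h} + S^{(i+1)}_{i+h})`. -/
theorem stmt_0 (α : ℝ) (hα : 0 < α)
    (b : ℕ → ℝ) (hb : ∀ k : ℕ, b k = 1 / ((k : ℝ) + 1) + (k : ℝ) * α ^ 2)
    (S : ℕ → ℕ → ℝ)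
    (hS_zero : ∀ k i : ℕ, i < k → S k i = 0)
    (hS_diag : ∀ k : ℕ, S k k = 1)
    (hS_rec : ∀ k i : ℕ, k ≤ i →
      S k (i + 1) = α ^ 2 * (if k = 0 then 0 else S (k - 1) i) - b k * S k i + S (k + 1) i) :
    ∀ h k : ℕ, S k (k + h + 1) =
      ∑ i ∈ Finset.range (k + 1),
        α ^ (2 * (k - i)) * (-(b i) * S i (i + h) + S (i + 1) (i + h)) := by
  intro h k
  induction k with
  | zero =>
    have hr := hS_rec 0 h (Nat.zero_le _)
    norm_num at hr
    simp only [Finset.sum_range_one, Nat.sub_zero, mul_zero, pow_zero, one_mul,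
      Nat.zero_add]
    rw [hr]; ring
  | succ k ih =>
    have hr := hS_rec (k + 1) (k + 1 + h) (by omega)
    have hne : k + 1 ≠ 0 := by omega
    rw [if_neg hne] at hr
    have he1 : k + 1 + h + 1 = k + 1 + h + 1 := rfl
    have he2 : k + 1 - 1 = k := rfl
    rw [he2] at hr
    have he3 : k + 1 + h = k + h + 1 := by omega
    rw [he3] at hr
    rw [show k + 1 + h + 1 = k + h + 1 + 1 from by omega, Finset.sum_range_succ, hr, ih, Finset.mul_sum]
    have hterm : ∀ i ∈ Finset.range (k + 1),
        α ^ 2 * (α ^ (2 * (k - i)) * (-(b i) * S i (i + h) + S (i + 1) (i + h)))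
        = α ^ (2 * (k + 1 - i)) * (-(b i) * S i (i + h) + S (i + 1) (i + h)) := by
      intro i hi
      rw [Finset.mem_range] at hi
      have : 2 * (k + 1 - i) = 2 + 2 * (k - i) := by omega
      rw [this, pow_add, mul_assoc]
    rw [Finset.sum_congr rfl hterm]
    have : k + 1 - (k + 1) = 0 := by omega
    rw [this, pow_zero, he3]
    ring
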